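/- arXiv:1003.1740 — 5 statements merged into one kernel-verified Lean document; each statement's English description precedes it below -/
import Mathlib

section
/- Suppose A is strictly T-monotone, u solves the bilateral obstacle problem on K_ψ^φ with forcing L, and there exists Λ ∈ V' with Λ ≥ L and Λ ≥ Aψ. Then Au ≤ Λ in V'. (Upper Lewy–Stampacchia bound in abstract form.) -/
/-- Upper Lewy–Stampacchia bound in abstract form: if `u` solves the bilateral obstacle
problem on `K_ψ^φ` with forcing `L`, and `Λ ≥ L`, `Λ ≥ Aψ` in the dual order,
then `Au ≤ Λ` in `V'`. -/
theorem upper_lewy_stampacchia {V : Type*} [Lattice V] [AddCommGroup V] [Module ℝ V]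
    [CovariantClass V V (· + ·) (· ≤ ·)]
    (A : V → V →ₗ[ℝ] ℝ)
    (hT : ∀ u v : V, (u - v) ⊔ 0 ≠ 0 → 0 < A u ((u - v) ⊔ 0) - A v ((u - v) ⊔ 0))
    (ψ φ u : V) (hψφ : ψ ≤ φ)
    (L Λ : V →ₗ[ℝ] ℝ)
    (hΛL : ∀ w : V, 0 ≤ w → L w ≤ Λ w)
    (hΛψ : ∀ w : V, 0 ≤ w → A ψ w ≤ Λ w)
    (hu : ψ ≤ u ∧ u ≤ φ)
    (hVI : ∀ v : V, ψ ≤ v → v ≤ φ → 0 ≤ A u (v - u) - L (v - u))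
    (haux : ∃! z : V, z ≤ u ∧ ∀ w : V, w ≤ u → 0 ≤ A z (w - z) - Λ (w - z)) :
    ∀ w : V, 0 ≤ w → A u w ≤ Λ w := by
  obtain ⟨z, ⟨hzu, hz⟩, -⟩ := haux
  -- Step 1: ψ ≤ z
  have hsub : (z ⊔ ψ) - z = (ψ - z) ⊔ 0 := by
    rw [sup_sub, sub_self, sup_comm]
  have hψz : ψ ≤ z := by
    by_contra hc
    have hne : (ψ - z) ⊔ 0 ≠ 0 := by
      intro h
      exact hc (sub_nonpos.mp (sup_eq_right.mp h))
    have h1 := hz (z ⊔ ψ) (sup_le hzu hu.1)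
    rw [hsub] at h1
    have h2 := hΛψ ((ψ - z) ⊔ 0) le_sup_right
    have h3 := hT ψ z hne
    linarith only [h1, h2, h3]
  -- Step 2: z = u
  have hzu' : z = u := by
    by_contra hc
    have huz : 0 ≤ u - z := sub_nonneg.mpr hzu
    have hsup : (u - z) ⊔ 0 = u - z := sup_eq_left.mpr huz
    have hne : (u - z) ⊔ 0 ≠ 0 := by
      rw [hsup]; intro h; exact hc (sub_eq_zero.mp h).symm
    have h1 := hVI z hψz (hzu.trans hu.2)
    have h2 := hz u le_rfl
    have h3 := hΛL (u - z) huz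
    have h4 := hT u z hne
    rw [hsup] at h4
    have e1 : A u (z - u) = - A u (u - z) := by
      rw [show z - u = -(u - z) by abel, map_neg]
    have e2 : L (z - u) = - L (u - z) := by
      rw [show z - u = -(u - z) by abel, map_neg]
    rw [e1, e2] at h1
    linarith only [h1, h2, h3, h4]
  -- Step 3: conclude
  intro w hw
  have h := hz (u - w) (by simpa using hw)
  rw [hzu'] at h
  have e : (u - w) - u = -w := by abel
  rw [e, map_neg, map_neg] at h
  linarith
end

section
/- Suppose A is strictly T-monotone, u solves the bilateral obstacle problem on K_ψ^φ with forcing L, and there exists λ ∈ V' with λ ≤ L and λ ≤ Aφ. Then λ ≤ Au in V'. (Lower Lewy–Stampacchia bound in abstract form.) -/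
/-- Lower Lewy–Stampacchia bound in abstract form: if `u` solves the bilateral obstacle
problem on `K_ψ^φ` with forcing `L`, and `λ ≤ L`, `λ ≤ Aφ` in the dual order,
then `λ ≤ Au` in `V'`. -/
theorem lower_lewy_stampacchia {V : Type*} [Lattice V] [AddCommGroup V] [Module ℝ V]
    [CovariantClass V V (· + ·) (· ≤ ·)]
    (A : V → V →ₗ[ℝ] ℝ)
    (hT : ∀ u v : V, (u - v) ⊔ 0 ≠ 0 → 0 < A u ((u - v) ⊔ 0) - A v ((u - v) ⊔ 0))
    (ψ φ u : V) (hψφ : ψ ≤ φ)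
    (L lam : V →ₗ[ℝ] ℝ)
    (hlamL : ∀ w : V, 0 ≤ w → lam w ≤ L w)
    (hlamφ : ∀ w : V, 0 ≤ w → lam w ≤ A φ w)
    (hu : ψ ≤ u ∧ u ≤ φ)
    (hVI : ∀ v : V, ψ ≤ v → v ≤ φ → 0 ≤ A u (v - u) - L (v - u))
    (haux : ∃! z : V, u ≤ z ∧ ∀ w : V, u ≤ w → 0 ≤ A z (w - z) - lam (w - z)) :
    ∀ w : V, 0 ≤ w → lam w ≤ A u w := by
  obtain ⟨z, ⟨huz, hzVI⟩, -⟩ := haux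
  -- Step 1: z ≤ φ
  have hzφ : z ≤ φ := by
    set p : V := (z - φ) ⊔ 0 with hp
    by_contra hcon
    have hpne : p ≠ 0 := by
      intro h
      exact hcon (sub_nonpos.mp (sup_eq_right.mp (by simpa [hp] using h)))
    have hstrict := hT z φ hpne
    have hinf : z - z ⊓ φ = p := by
      rw [sub_inf, sub_self, sup_comm]
    have hw : u ≤ z ⊓ φ := le_inf huz hu.2
    have h1 := hzVI (z ⊓ φ) hw
    have h2 : z ⊓ φ - z = -p := by rw [← hinf]; abel
    rw [h2, map_neg, map_neg] at h1
    have hple : (0:V) ≤ p := le_sup_right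
    have h3 := hlamφ p hple
    linarith only [hstrict, h1, h3]
  -- Step 2: z = u
  have hzu : z = u := by
    by_contra hcon
    have hq : (z - u) ⊔ 0 = z - u := sup_eq_left.mpr (sub_nonneg.mpr huz)
    have hqne : (z - u) ⊔ 0 ≠ 0 := by
      rw [hq]; intro h; exact hcon (by rwa [sub_eq_zero] at h)
    have hstrict := hT z u hqne
    rw [hq] at hstrict
    have h1 := hVI z (le_trans hu.1 huz) hzφ
    have h2 := hzVI u le_rfl
    have h3 : u - z = -(z - u) := by abel
    rw [h3, map_neg, map_neg] at h2
    have h4 := hlamL (z - u) (sub_nonneg.mpr huz)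
    linarith only [hstrict, h1, h2, h4]
  -- Step 3
  intro w hw
  have h := hzVI (u + w) (le_add_of_nonneg_right hw)
  rw [hzu] at h
  have h2 : u + w - u = w := by abel
  rw [h2] at h
  linarith
end

section
/- If L, Aφ, Aψ belong to the dual order V* of V, and u solves the bilateral obstacle problem, then Au ∈ V* and L ∧ Aφ ≤ Au ≤ L ∨ Aψ in V*. -/
/-- Membership in the dual order `V* = P' - P'`: a functional belongs to `V*` iff it is a
difference of two functionals that are nonnegative on the positive cone of `V`. -/
def InDualOrder {V : Type*} [Lattice V] [AddCommGroup V] [Module ℝ V]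
    (T : V →ₗ[ℝ] ℝ) : Prop :=
  ∃ P Q : V →ₗ[ℝ] ℝ, (∀ w : V, 0 ≤ w → 0 ≤ P w) ∧ (∀ w : V, 0 ≤ w → 0 ≤ Q w) ∧ T = P - Q

/-- Lewy–Stampacchia inequalities in the dual order: if `L`, `Aφ`, `Aψ ∈ V*` and `u` solves
the bilateral obstacle problem, then `Au ∈ V*` and `L ∧ Aφ ≤ Au ≤ L ∨ Aψ` in `V*`,
where `m = L ∧ Aφ` and `M = L ∨ Aψ` are the lattice operations in the dual order. -/
theorem lewy_stampacchia_dual_order {V : Type*} [Lattice V] [AddCommGroup V] [Module ℝ V]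
    [CovariantClass V V (· + ·) (· ≤ ·)]
    (A : V → V →ₗ[ℝ] ℝ)
    (hT : ∀ u v : V, (u - v) ⊔ 0 ≠ 0 → 0 < A u ((u - v) ⊔ 0) - A v ((u - v) ⊔ 0))
    (ψ φ u : V) (hψφ : ψ ≤ φ)
    (L m M : V →ₗ[ℝ] ℝ)
    (hL : InDualOrder L) (hAφ : InDualOrder (A φ)) (hAψ : InDualOrder (A ψ))
    -- `m = L ∧ Aφ` : greatest lower bound of `L` and `Aφ` in the dual order, in `V*`
    (hmVstar : InDualOrder m)
    (hm_le : ∀ w : V, 0 ≤ w → m w ≤ L w ∧ m w ≤ A φ w)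
    (hm_glb : ∀ m' : V →ₗ[ℝ] ℝ, (∀ w : V, 0 ≤ w → m' w ≤ L w ∧ m' w ≤ A φ w) →
      ∀ w : V, 0 ≤ w → m' w ≤ m w)
    -- `M = L ∨ Aψ` : least upper bound of `L` and `Aψ` in the dual order, in `V*`
    (hMVstar : InDualOrder M)
    (hM_ge : ∀ w : V, 0 ≤ w → L w ≤ M w ∧ A ψ w ≤ M w)
    (hM_lub : ∀ M' : V →ₗ[ℝ] ℝ, (∀ w : V, 0 ≤ w → L w ≤ M' w ∧ A ψ w ≤ M' w) →
      ∀ w : V, 0 ≤ w → M w ≤ M' w)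
    (hu : ψ ≤ u ∧ u ≤ φ)
    (hVI : ∀ v : V, ψ ≤ v → v ≤ φ → 0 ≤ A u (v - u) - L (v - u))
    (haux₁ : ∃! z : V, z ≤ u ∧ ∀ w : V, w ≤ u → 0 ≤ A z (w - z) - M (w - z))
    (haux₂ : ∃! z : V, u ≤ z ∧ ∀ w : V, u ≤ w → 0 ≤ A z (w - z) - m (w - z)) :
    InDualOrder (A u) ∧ ∀ w : V, 0 ≤ w → m w ≤ A u w ∧ A u w ≤ M w := by

  obtain ⟨hψu, huφ⟩ := hu
  -- Upper bound: A u ≤ M on the positive cone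
  have hupper : ∀ p : V, 0 ≤ p → A u p ≤ M p := by
    obtain ⟨z, ⟨hzu, hzVI⟩, -⟩ := haux₁
    -- first show ψ ≤ z
    have hψz : ψ ≤ z := by
      set p := (ψ - z) ⊔ 0 with hp
      have hp0 : 0 ≤ p := le_sup_right
      have hkey : z + p = ψ ⊔ z := by
        rw [hp, add_sup, add_zero]
        congr 1
        abel
      have hwu : z + p ≤ u := by rw [hkey]; exact sup_le hψu hzu
      have h1 := hzVI (z + p) hwu
      rw [add_sub_cancel_left] at h1
      have h2 := (hM_ge p hp0).2
      have hp0' : p = 0 := by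
        by_contra hpne
        have h3 := hT ψ z (hp ▸ hpne)
        rw [← hp] at h3
        linarith
      exact sub_nonpos.mp (sup_eq_right.mp (hp ▸ hp0'))
    -- then show z = u
    have hzeq : z = u := by
      have h1 := hVI z hψz (hzu.trans huφ)
      have h2 := hzVI u le_rfl
      set q := u - z with hq
      have hq0 : 0 ≤ q := sub_nonneg.mpr hzu
      have hzu' : z - u = -q := by rw [hq]; abel
      rw [hzu', map_neg, map_neg] at h1
      have h4 := (hM_ge q hq0).1
      have hsup : (u - z) ⊔ 0 = q := by rw [← hq]; exact sup_eq_left.mpr hq0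
      have hq0' : q = 0 := by
        by_contra hqne
        have h5 := hT u z (by rw [hsup]; exact hqne)
        rw [hsup] at h5
        linarith
      exact (sub_eq_zero.mp (hq ▸ hq0')).symm
    intro p hp0
    have h := hzVI (u - p) (by simpa using hp0)
    rw [hzeq] at h
    have hh : u - p - u = -p := by abel
    rw [hh, map_neg, map_neg] at h
    linarith
  -- Lower bound: m ≤ A u on the positive cone
  have hlower : ∀ p : V, 0 ≤ p → m p ≤ A u p := by
    obtain ⟨z, ⟨huz, hzVI⟩, -⟩ := haux₂
    -- first show z ≤ φ
    have hzφ : z ≤ φ := by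
      set p := (z - φ) ⊔ 0 with hp
      have hp0 : 0 ≤ p := le_sup_right
      have hkey : z + -p = φ ⊓ z := by
        rw [hp, neg_sup, add_inf]
        congr 1 <;> abel
      have hwu : u ≤ z + -p := by rw [hkey]; exact le_inf huφ huz
      have h1 := hzVI (z + -p) hwu
      rw [add_sub_cancel_left, map_neg, map_neg] at h1
      have h2 := (hm_le p hp0).2
      have hp0' : p = 0 := by
        by_contra hpne
        have h3 := hT z φ (hp ▸ hpne)
        rw [← hp] at h3
        linarith
      exact sub_nonpos.mp (sup_eq_right.mp (hp ▸ hp0'))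
    -- then show z = u
    have hzeq : z = u := by
      have h1 := hVI z (hψu.trans huz) hzφ
      have h2 := hzVI u le_rfl
      set q := z - u with hq
      have hq0 : 0 ≤ q := sub_nonneg.mpr huz
      have huz' : u - z = -q := by rw [hq]; abel
      rw [huz', map_neg, map_neg] at h2
      have h4 := (hm_le q hq0).1
      have hsup : (z - u) ⊔ 0 = q := by rw [← hq]; exact sup_eq_left.mpr hq0
      have hq0' : q = 0 := by
        by_contra hqne
        have h5 := hT z u (by rw [hsup]; exact hqne)
        rw [hsup] at h5
        linarith
      exact sub_eq_zero.mp (hq ▸ hq0')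
    intro p hp0
    have h := hzVI (u + p) (by simpa using hp0)
    rw [hzeq, add_sub_cancel_left] at h
    linarith
  refine ⟨?_, fun w hw => ⟨hlower w hw, hupper w hw⟩⟩
  obtain ⟨P, Q, hP, hQ, hm⟩ := hmVstar
  refine ⟨P + (A u - m), Q, fun w hw => ?_, hQ, ?_⟩
  · have h1 := hP w hw
    have h2 := hlower w hw
    simp only [LinearMap.add_apply, LinearMap.sub_apply]
    linarith
  · rw [hm]; abel
end

section
/- Let u be the unique solution of the two-obstacle problem on K_ψ^φ and ū the unique solution of the lower one-obstacle problem on K_ψ = {v ∈ V : v ≥ ψ}, both with the same forcing L and strictly T-monotone operator A. If Aφ ≥ L in V', then ū ≤ φ, hence ū = u. -/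
/-- If `Aφ ≥ L` in `V'`, then the solution `ū` of the lower one-obstacle problem on
`K_ψ` satisfies `ū ≤ φ`, hence it coincides with the solution `u` of the two-obstacle
problem on `K_ψ^φ`. -/
theorem lower_obstacle_eq_bilateral {V : Type*} [Lattice V] [AddCommGroup V] [Module ℝ V]
    [CovariantClass V V (· + ·) (· ≤ ·)]
    (A : V → V →ₗ[ℝ] ℝ)
    (hT : ∀ u v : V, (u - v) ⊔ 0 ≠ 0 → 0 < A u ((u - v) ⊔ 0) - A v ((u - v) ⊔ 0))
    (ψ φ : V) (hψφ : ψ ≤ φ)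
    (L : V →ₗ[ℝ] ℝ)
    (u ub : V)
    (hu : ψ ≤ u ∧ u ≤ φ)
    (hVI : ∀ v : V, ψ ≤ v → v ≤ φ → 0 ≤ A u (v - u) - L (v - u))
    (hub : ψ ≤ ub)
    (hVIub : ∀ v : V, ψ ≤ v → 0 ≤ A ub (v - ub) - L (v - ub))
    -- uniqueness of the solution of the two-obstacle problem
    (huniq : ∀ w₁ w₂ : V, (ψ ≤ w₁ ∧ w₁ ≤ φ ∧ ∀ v : V, ψ ≤ v → v ≤ φ → 0 ≤ A w₁ (v - w₁) - L (v - w₁)) →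
      (ψ ≤ w₂ ∧ w₂ ≤ φ ∧ ∀ v : V, ψ ≤ v → v ≤ φ → 0 ≤ A w₂ (v - w₂) - L (v - w₂)) → w₁ = w₂)
    (hAφL : ∀ w : V, 0 ≤ w → L w ≤ A φ w) :
    ub ≤ φ ∧ ub = u := by
  set w : V := (ub - φ) ⊔ 0 with hw
  have hle : ub ≤ φ := by
    by_contra hneq
    have hwne : w ≠ 0 := by
      intro h0
      exact hneq (sub_nonpos.mp (h0 ▸ le_sup_left))
    have h1 : ub ⊔ φ - φ = w := by rw [hw, sup_sub, sub_self]
    have hv : ub - w = ub ⊓ φ := by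
      rw [← h1]
      have key := inf_add_sup ub φ
      have h2 : ub - (ub ⊔ φ - φ) = ub + φ - (ub ⊔ φ) := by abel
      rw [h2, sub_eq_iff_eq_add]
      exact key.symm
    have hvψ : ψ ≤ ub - w := by rw [hv]; exact le_inf hub hψφ
    have h3 := hVIub (ub - w) hvψ
    have h4 : (ub - w) - ub = -w := by abel
    rw [h4, map_neg, map_neg] at h3
    have h5 : L w ≤ A φ w := hAφL w le_sup_right
    have h6 := hT ub φ hwne
    linarith only [h3, h5, h6]
  have heq : ub = u := by
    refine huniq ub u ⟨hub, hle, ?_⟩ ⟨hu.1, hu.2, hVI⟩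
    intro v hv1 _
    exact hVIub v hv1
  exact ⟨hle, heq⟩
end

section
/- Let u be the unique solution of the two-obstacle problem on K_ψ^φ and ũ the unique solution of the upper one-obstacle problem on K^φ = {v ∈ V : v ≤ φ}, both with the same forcing L. If Aψ ≤ L in V', then ũ ≥ ψ, hence ũ = u. -/
/-- If `Aψ ≤ L` in `V'`, then the solution `ũ` of the upper one-obstacle problem on
`K^φ` satisfies `ũ ≥ ψ`, hence it coincides with the solution `u` of the two-obstacle
problem on `K_ψ^φ`. -/
theorem upper_obstacle_eq_bilateral {V : Type*} [Lattice V] [AddCommGroup V] [Module ℝ V]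
    [CovariantClass V V (· + ·) (· ≤ ·)]
    (A : V → V →ₗ[ℝ] ℝ)
    (hT : ∀ u v : V, (u - v) ⊔ 0 ≠ 0 → 0 < A u ((u - v) ⊔ 0) - A v ((u - v) ⊔ 0))
    (ψ φ : V) (hψφ : ψ ≤ φ)
    (L : V →ₗ[ℝ] ℝ)
    (u ut : V)
    (hu : ψ ≤ u ∧ u ≤ φ)
    (hVI : ∀ v : V, ψ ≤ v → v ≤ φ → 0 ≤ A u (v - u) - L (v - u))
    (hut : ut ≤ φ)
    (hVIut : ∀ v : V, v ≤ φ → 0 ≤ A ut (v - ut) - L (v - ut))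
    -- uniqueness of the solution of the two-obstacle problem
    (huniq : ∀ w₁ w₂ : V, (ψ ≤ w₁ ∧ w₁ ≤ φ ∧ ∀ v : V, ψ ≤ v → v ≤ φ → 0 ≤ A w₁ (v - w₁) - L (v - w₁)) →
      (ψ ≤ w₂ ∧ w₂ ≤ φ ∧ ∀ v : V, ψ ≤ v → v ≤ φ → 0 ≤ A w₂ (v - w₂) - L (v - w₂)) → w₁ = w₂)
    (hAψL : ∀ w : V, 0 ≤ w → A ψ w ≤ L w) :
    ψ ≤ ut ∧ ut = u := by
  -- Set p := (ψ - ut) ⊔ 0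
  set p : V := (ψ - ut) ⊔ 0 with hp
  have hsup : ut ⊔ ψ ≤ φ := sup_le hut hψφ
  have hsub : (ut ⊔ ψ) - ut = p := by
    rw [hp, sub_eq_add_neg, sup_add, add_neg_cancel, ← sub_eq_add_neg, sup_comm]
  have h1 : 0 ≤ A ut p - L p := by
    have := hVIut (ut ⊔ ψ) hsup
    rwa [hsub] at this
  have hp0 : 0 ≤ p := le_sup_right
  have h2 : A ψ p ≤ L p := hAψL p hp0
  have hple : ψ ≤ ut := by
    by_contra h
    have hpne : p ≠ 0 := by
      intro h0
      apply h
      have hle : ψ - ut ≤ p := le_sup_left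
      rw [h0] at hle
      exact sub_nonpos.mp hle
    have h3 := hT ψ ut hpne
    rw [← hp] at h3
    linarith only [h1, h2, h3]
  refine ⟨hple, ?_⟩
  apply huniq
  · exact ⟨hple, hut, fun v hv1 hv2 => hVIut v hv2⟩
  · exact ⟨hu.1, hu.2, hVI⟩
end
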